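/- In any trace monoid M(Σ,I), the growth series Z_M(t) = Σ_{x∈M} t^{|x|} and the Möbius polynomial μ_M(t) = Σ_{c∈C} (-1)^{|c|} t^{|c|} satisfy Z_M(t)·μ_M(t) = 1 as formal power series. -/

import Mathlib

open FreeMonoid

set_option linter.unusedVariables false
set_option linter.unusedSectionVars false
set_option maxHeartbeats 1600000

/-- The congruence on the free monoid over `α` generated by the commutations
`ab = ba` for `(a,b) ∈ I`; the quotient is the trace monoid `M(α, I)`. -/
def traceCon {α : Type*} (I : α → α → Prop) : Con (FreeMonoid α) :=
  conGen (fun x y => ∃ a b, I a b ∧ x = of a * of b ∧ y = of b * of a)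

namespace TraceAux
variable {α : Type*} [DecidableEq α] {I : α → α → Prop}

theorem hom_eq {N : Type*} [Monoid N] (f : FreeMonoid α →* N)
    (hf : ∀ a b, I a b → f (of a * of b) = f (of b * of a))
    {u v : FreeMonoid α} (h : traceCon I u v) : f u = f v := by
  induction h with
  | of x y h => obtain ⟨a, b, hI, rfl, rfl⟩ := h; exact hf a b hI
  | refl => rfl
  | symm _ ih => exact ih.symm
  | trans _ _ ih1 ih2 => exact ih1.trans ih2
  | mul _ _ ih1 ih2 => rw [map_mul, map_mul, ih1, ih2]

/-- projection to the letters `{a, b}` -/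
def proj (a b : α) (l : List α) : List α := l.filter (fun c => c = a ∨ c = b)

lemma proj_append (a b : α) (l1 l2 : List α) :
    proj a b (l1 ++ l2) = proj a b l1 ++ proj a b l2 := List.filter_append _ _

lemma proj_cons (a b c : α) (l : List α) :
    proj a b (c :: l) = (if c = a ∨ c = b then [c] else []) ++ proj a b l := by
  simp only [proj, List.filter_cons]
  split_ifs with h <;> simp_all

lemma mem_of_mem_proj {a b c : α} {l : List α} (h : c ∈ proj a b l) : c ∈ l :=
  List.mem_of_mem_filter h

lemma mem_proj_of_mem {a b c : α} {l : List α} (hc : c ∈ l) (h : c = a ∨ c = b) :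
    c ∈ proj a b l := List.mem_filter.2 ⟨hc, by simpa using h⟩

def projHom (a b : α) : FreeMonoid α →* FreeMonoid α where
  toFun x := ofList (proj a b (toList x))
  map_one' := rfl
  map_mul' x y := by simp only [toList_mul, proj_append, ofList_append]

lemma proj_invariant (hirr : ∀ a, ¬ I a a) (hsym : ∀ a b, I a b → I b a)
    {a b : α} (hab : a = b ∨ ¬ I a b)
    {u v : FreeMonoid α} (h : traceCon I u v) :
    proj a b (toList u) = proj a b (toList v) := by
  have key := hom_eq (projHom a b) (fun a' b' hI => ?_) h
  · exact congrArg toList key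
  · have hne : a' ≠ b' := fun e => hirr a' (e ▸ hI)
    apply toList.injective
    show proj a b (toList (of a' * of b')) = proj a b (toList (of b' * of a'))
    simp only [toList_mul, toList_of]
    show proj a b ([a'] ++ [b']) = proj a b ([b'] ++ [a'])
    rw [proj_append, proj_append]
    by_cases h1 : a' = a ∨ a' = b
    · by_cases h2 : b' = a ∨ b' = b
      · exfalso
        rcases hab with rfl | hnab
        · rcases h1 with rfl | rfl <;> rcases h2 with e | e <;> exact hne (by rw [e])
        · rcases h1 with rfl | rfl <;> rcases h2 with rfl | rfl
          · exact hne rfl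
          · exact hnab hI
          · exact hnab (hsym _ _ hI)
          · exact hne rfl
      · simp [proj, h1, h2]
    · by_cases h2 : b' = a ∨ b' = b <;> simp [proj, h1, h2]

lemma brel {a b : α} (hI : I a b) : traceCon I (of a * of b) (of b * of a) :=
  ConGen.Rel.of _ _ ⟨a, b, hI, rfl, rfl⟩

lemma comm_list {c : α} {l : List α} (hI : ∀ d ∈ l, I c d) :
    traceCon I (ofList l * of c) (of c * ofList l) := by
  induction l with
  | nil => simpa using (traceCon I).refl (of c)
  | cons d l ih =>
    have h1 : traceCon I (ofList (d :: l) * of c) (of d * (of c * ofList l)) := by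
      rw [ofList_cons, mul_assoc]
      exact (traceCon I).mul ((traceCon I).refl (of d)) (ih fun e he => hI e (List.mem_cons_of_mem _ he))
    have h2 : traceCon I (of d * (of c * ofList l)) (of c * ofList (d :: l)) := by
      rw [ofList_cons, ← mul_assoc, ← mul_assoc]
      exact (traceCon I).mul (brel (hI d (List.mem_cons_self : d ∈ d :: l))).symm ((traceCon I).refl (ofList l))
    exact h1.trans h2

lemma exists_first {c : α} : ∀ {v : List α}, c ∈ v →
    ∃ v1 v2, v = v1 ++ c :: v2 ∧ c ∉ v1 := by
  intro v hv
  induction v with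
  | nil => simp at hv
  | cons d v ih =>
    by_cases hd : d = c
    · exact ⟨[], v, by simp [hd], by simp⟩
    · have : c ∈ v := by
        rcases List.mem_cons.1 hv with h | h
        · exact absurd h.symm hd
        · exact h
      obtain ⟨v1, v2, rfl, hc⟩ := ih this
      exact ⟨d :: v1, v2, rfl, by simp [hc, Ne.symm hd]⟩

theorem proj_faithful (hirr : ∀ a, ¬ I a a) (hsym : ∀ a b, I a b → I b a) :
    ∀ (u v : List α), (∀ a b, a = b ∨ ¬ I a b → proj a b u = proj a b v) →
      traceCon I (ofList u) (ofList v) := by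
  intro u
  induction u with
  | nil =>
    intro v h
    cases v with
    | nil => exact (traceCon I).refl _
    | cons c v' =>
      exfalso
      have := h c c (Or.inl rfl)
      simp [proj, List.filter_cons] at this
  | cons c u' ih =>
    intro v h
    have hcv : c ∈ v := by
      have := h c c (Or.inl rfl)
      have hmem : c ∈ proj c c v := by
        rw [← this]; simp [proj, List.filter_cons]
      exact List.mem_of_mem_filter hmem
    obtain ⟨v1, v2, rfl, hc1⟩ := exists_first hcv
    have hcomm : ∀ d ∈ v1, I c d := by
      intro d hd
      by_contra hnI
      have hdc : d ≠ c := fun e => hc1 (e ▸ hd)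
      have heq := h c d (Or.inr hnI)
      rw [proj_append] at heq
      have h1 : proj c d (c :: u') = c :: proj c d u' := by
        simp [proj, List.filter_cons]
      have h2 : proj c d (c :: v2) = c :: proj c d v2 := by
        simp [proj, List.filter_cons]
      rw [h1, h2] at heq
      have hdp : d ∈ proj c d v1 := List.mem_filter.2 ⟨hd, by simp⟩
      cases hp : proj c d v1 with
      | nil => rw [hp] at hdp; simp at hdp
      | cons e rest =>
        rw [hp] at heq
        have : c = e := by injection heq
        have : e ∈ v1 := List.mem_of_mem_filter (hp ▸ (List.mem_cons_self : e ∈ e :: rest))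
        exact hc1 (by rwa [← ‹c = e›] at this)
    have hproj' : ∀ a b, a = b ∨ ¬ I a b → proj a b u' = proj a b (v1 ++ v2) := by
      intro a b hab
      have heq := h a b hab
      rw [proj_append] at heq
      by_cases hc : c = a ∨ c = b
      · have hv1 : proj a b v1 = [] := by
          rw [proj, List.filter_eq_nil_iff]
          intro d hd hdp
          have hdp' : d = a ∨ d = b := by simpa using hdp
          have hdc : d ≠ c := fun e => hc1 (e ▸ hd)
          have hIcd : I c d := hcomm d hd
          rcases hab with rfl | hnab
          · rcases hc with rfl | rfl <;> rcases hdp' with rfl | rfl <;> exact hdc rfl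
          · rcases hc with rfl | rfl <;> rcases hdp' with rfl | rfl <;>
              first
                | exact hdc rfl
                | exact hnab hIcd
                | exact hnab (hsym _ _ hIcd)
        have h1 : proj a b (c :: u') = c :: proj a b u' := by
          simp only [proj, List.filter_cons]
          simp [hc]
        have h2 : proj a b (c :: v2) = c :: proj a b v2 := by
          simp only [proj, List.filter_cons]
          simp [hc]
        rw [h1, h2, hv1] at heq
        rw [proj_append, hv1]
        simpa using heq
      · push_neg at hc
        have h1 : proj a b (c :: u') = proj a b u' := by
          simp [proj, List.filter_cons, hc.1, hc.2]
        have h2 : proj a b (c :: v2) = proj a b v2 := by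
          simp [proj, List.filter_cons, hc.1, hc.2]
        rw [h1, h2] at heq
        rw [proj_append]
        exact heq
    have hmid := ih (v1 ++ v2) hproj'
    have step1 : traceCon I (ofList (c :: u')) (of c * ofList (v1 ++ v2)) := by
      rw [ofList_cons]
      exact (traceCon I).mul ((traceCon I).refl (of c)) hmid
    have step2 : traceCon I (of c * ofList (v1 ++ v2)) (ofList (v1 ++ c :: v2)) := by
      have h' := (traceCon I).mul (comm_list hcomm).symm ((traceCon I).refl (ofList v2))
      rw [ofList_append, ofList_append, ofList_cons]
      simpa [mul_assoc] using h'
    exact step1.trans step2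

lemma mem_of_getLast? {β : Type*} {l : List β} {a : β} (h : l.getLast? = some a) : a ∈ l := by
  induction l with
  | nil => simp at h
  | cons b l ih =>
    cases l with
    | nil => simp_all
    | cons c l' =>
      rw [List.getLast?_cons_cons] at h
      exact List.mem_cons_of_mem _ (ih h)

lemma exists_last {c : α} {v : List α} (h : c ∈ v) :
    ∃ v1 v2, v = v1 ++ c :: v2 ∧ c ∉ v2 := by
  have h' : c ∈ v.reverse := by simpa using h
  obtain ⟨w1, w2, hw, hc⟩ := exists_first h'
  refine ⟨w2.reverse, w1.reverse, ?_, by simpa using hc⟩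
  have := congrArg List.reverse hw
  simpa using this

lemma cancel_of (hirr : ∀ a, ¬ I a a) (hsym : ∀ a b, I a b → I b a)
    {u v : FreeMonoid α} {a : α}
    (h : traceCon I (u * of a) (v * of a)) : traceCon I u v := by
  have hf := proj_faithful hirr hsym (toList u) (toList v) ?_
  · simpa [ofList_toList] using hf
  · intro b c hbc
    have hpi := proj_invariant hirr hsym hbc h
    rw [toList_mul, toList_mul, toList_of, proj_append, proj_append] at hpi
    exact List.append_cancel_right hpi

lemma cancel_list (hirr : ∀ a, ¬ I a a) (hsym : ∀ a b, I a b → I b a)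
    (l : List α) : ∀ {u v : FreeMonoid α},
    traceCon I (u * ofList l) (v * ofList l) → traceCon I u v := by
  induction l using List.reverseRecOn with
  | nil => intro u v h; simpa using h
  | append_singleton l a ih =>
    intro u v h
    rw [ofList_append] at h
    apply ih
    apply cancel_of hirr hsym (a := a)
    rw [mul_assoc, mul_assoc]
    exact h

-- quotient level
lemma cancel_right_q (hirr : ∀ a, ¬ I a a) (hsym : ∀ a b, I a b → I b a)
    {x y z : (traceCon I).Quotient} (h : x * z = y * z) : x = y := by
  obtain ⟨u, rfl⟩ := Con.mk'_surjective x
  obtain ⟨v, rfl⟩ := Con.mk'_surjective y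
  obtain ⟨w, rfl⟩ := Con.mk'_surjective z
  rw [← map_mul, ← map_mul] at h
  have h' : traceCon I (u * w) (v * w) := (Con.eq _).1 h
  have := cancel_list hirr hsym (toList w) (u := u) (v := v) (by rwa [ofList_toList])
  exact (Con.eq _).2 this

lemma comm_q {a b : α} (hI : I a b) :
    ((traceCon I).mk' (of a) : (traceCon I).Quotient) * (traceCon I).mk' (of b)
      = (traceCon I).mk' (of b) * (traceCon I).mk' (of a) := by
  rw [← map_mul, ← map_mul]
  exact (Con.eq _).2 (brel hI)

theorem levi (hirr : ∀ a, ¬ I a a) (hsym : ∀ a b, I a b → I b a)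
    {x z : (traceCon I).Quotient} {a b : α} (hab : a ≠ b)
    (h : x * (traceCon I).mk' (of a) = z * (traceCon I).mk' (of b)) :
    I a b ∧ ∃ w : (traceCon I).Quotient, x = w * (traceCon I).mk' (of b) ∧ z = w * (traceCon I).mk' (of a) := by
  obtain ⟨u, rfl⟩ := Con.mk'_surjective x
  obtain ⟨v, rfl⟩ := Con.mk'_surjective z
  rw [← map_mul, ← map_mul] at h
  have hw : traceCon I (u * of a) (v * of b) := (Con.eq _).1 h
  have hIab : I a b := by
    by_contra hn
    have hpi := proj_invariant hirr hsym (Or.inr hn) hw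
    rw [toList_mul, toList_mul, toList_of, toList_of, proj_append, proj_append] at hpi
    have ha : proj a b [a] = [a] := by simp [proj]
    have hb : proj a b [b] = [b] := by simp [proj]
    rw [ha, hb] at hpi
    have := congrArg List.getLast? hpi
    rw [List.getLast?_concat, List.getLast?_concat] at this
    exact hab (Option.some.inj this)
  refine ⟨hIab, ?_⟩
  -- b occurs in u
  have hbu : b ∈ toList u := by
    have hpi := proj_invariant hirr hsym (Or.inl rfl) (a := b) (b := b) hw
    rw [toList_mul, toList_mul, toList_of, toList_of, proj_append, proj_append] at hpi
    have ha : proj b b [a] = [] := by simp [proj, hab]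
    have hb : proj b b [b] = [b] := by simp [proj]
    rw [ha, hb] at hpi
    have hpi' : proj b b (toList u) = proj b b (toList v) ++ [b] := by simpa using hpi
    have : b ∈ proj b b (toList u) := by rw [hpi']; simp
    exact List.mem_of_mem_filter this
  obtain ⟨u1, u2, hu, hbu2⟩ := exists_last hbu
  have hcomm2 : ∀ d ∈ u2, I b d := by
    intro d hd
    by_contra hnI
    have hdb : d ≠ b := fun e => hbu2 (e ▸ hd)
    have hda : d ≠ a := by
      intro e
      rw [e] at hnI
      exact hnI (hsym _ _ hIab)
    have hpi := proj_invariant hirr hsym (Or.inr hnI) (a := b) (b := d) hw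
    rw [toList_mul, toList_mul, toList_of, toList_of, hu, proj_append, proj_append,
      proj_append] at hpi
    have hpa : proj b d [a] = [] := by simp [proj, hab, Ne.symm hda]
    have hpb : proj b d [b] = [b] := by simp [proj]
    have hpbc : proj b d (b :: u2) = b :: proj b d u2 := by
      simp [proj, List.filter_cons]
    rw [hpa, hpb, hpbc] at hpi
    have hdp : d ∈ proj b d u2 := List.mem_filter.2 ⟨hd, by simp⟩
    have hne : proj b d u2 ≠ [] := fun e => by rw [e] at hdp; simp at hdp
    obtain ⟨l'', e', hl''⟩ : ∃ l'' e', proj b d u2 = l'' ++ [e'] := by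
      rcases List.eq_nil_or_concat (proj b d u2) with h0 | ⟨l'', e', h0⟩
      · exact absurd h0 hne
      · exact ⟨l'', e', by simpa [List.concat_eq_append] using h0⟩
    have he'mem : e' ∈ u2 := by
      apply List.mem_of_mem_filter (p := fun c => decide (c = b ∨ c = d))
      show e' ∈ proj b d u2
      rw [hl'']; simp
    have key : proj b d u1 ++ (b :: proj b d u2) ++ ([] : List α)
        = (proj b d u1 ++ b :: l'') ++ [e'] := by
      rw [hl'']; simp
    rw [key] at hpi
    have hlast := congrArg List.getLast? hpi
    rw [List.getLast?_concat, List.getLast?_concat] at hlast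
    have heb : e' = b := Option.some.inj hlast
    exact hbu2 (heb ▸ he'mem)
  -- x = w * b with w = mk (ofList (u1 ++ u2))
  have hx : traceCon I u (ofList (u1 ++ u2) * of b) := by
    have h0 : u = ofList (u1 ++ b :: u2) := by
      rw [← hu, ofList_toList]
    rw [h0, ofList_append, ofList_append, ofList_cons]
    have := (traceCon I).mul ((traceCon I).refl (ofList u1))
      ((traceCon I).symm (comm_list hcomm2))
    simpa [mul_assoc] using this
  refine ⟨(traceCon I).mk' (ofList (u1 ++ u2)), ?_, ?_⟩
  · rw [← map_mul]
    exact (Con.eq _).2 hx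
  · -- cancel b
    apply cancel_right_q hirr hsym (z := (traceCon I).mk' (of b))
    have hxq : ((traceCon I).mk' u : (traceCon I).Quotient)
        = (traceCon I).mk' (ofList (u1 ++ u2)) * (traceCon I).mk' (of b) := by
      rw [← map_mul]; exact (Con.eq _).2 hx
    have h' : ((traceCon I).mk' v : (traceCon I).Quotient) * (traceCon I).mk' (of b)
        = (traceCon I).mk' u * (traceCon I).mk' (of a) := by
      rw [← map_mul, ← map_mul]; exact h.symm
    rw [h', hxq, mul_assoc, mul_assoc, comm_q (hsym a b hIab)]


section Comb
variable [Fintype α] [LinearOrder α]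
variable (I)

/-- the clique predicate -/
def Clq (s : Finset α) : Prop := ∀ i ∈ s, ∀ j ∈ s, i ≠ j → I i j

/-- product of a clique, in sorted order -/
noncomputable def cliq (s : Finset α) : (traceCon I).Quotient :=
  (traceCon I).mk' (ofList (s.sort (· ≤ ·)))

variable {I}

lemma mk_ofList_map (l : List α) :
    (traceCon I).mk' (ofList l) = (l.map fun a => (traceCon I).mk' (of a)).prod := by
  induction l with
  | nil => simp
  | cons a l ih => rw [ofList_cons, map_mul, ih, List.map_cons, List.prod_cons]

lemma pairwise_commute {s : Finset α} (hs : Clq I s) :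
    ((s.sort (· ≤ ·)).map fun a => ((traceCon I).mk' (of a) : (traceCon I).Quotient)).Pairwise
      Commute := by
  apply List.Pairwise.map
  · intro c d h
    exact h
  · apply List.Pairwise.imp_of_mem (R := (· ≠ ·))
    · intro c d hc hd hne
      have hcs : c ∈ s := (Finset.mem_sort _).1 hc
      have hds : d ∈ s := (Finset.mem_sort _).1 hd
      exact comm_q (hs c hcs d hds hne)
    · exact Finset.sort_nodup _ _

lemma sort_perm_cons {s : Finset α} {a : α} (ha : a ∈ s) :
    (s.sort (· ≤ ·)).Perm (a :: (s.erase a).sort (· ≤ ·)) := by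
  rw [← Multiset.coe_eq_coe]
  show ((s.sort (· ≤ ·) : List α) : Multiset α)
      = ((a :: (s.erase a).sort (· ≤ ·) : List α) : Multiset α)
  rw [Finset.sort_eq, ← Multiset.cons_coe, Finset.sort_eq, Finset.erase_val,
    Multiset.cons_erase (Finset.mem_def.1 ha)]

lemma cliq_cons {s : Finset α} {a : α} (hs : Clq I s) (ha : a ∈ s) :
    cliq I s = (traceCon I).mk' (of a) * cliq I (s.erase a) := by
  have hperm := (sort_perm_cons ha).map
    (fun a => ((traceCon I).mk' (of a) : (traceCon I).Quotient))
  have := hperm.prod_eq' (pairwise_commute hs)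
  rw [cliq, cliq, mk_ofList_map, mk_ofList_map, this, List.map_cons, List.prod_cons]

lemma cliq_empty : cliq I (∅ : Finset α) = 1 := by
  simp [cliq]

lemma Clq_erase {s : Finset α} (hs : Clq I s) (a : α) : Clq I (s.erase a) :=
  fun i hi j hj hne => hs i (Finset.mem_of_mem_erase hi) j (Finset.mem_of_mem_erase hj) hne

lemma Clq_insert (hsym : ∀ a b, I a b → I b a) {s : Finset α} {a : α} (hs : Clq I s)
    (haI : ∀ b ∈ s, I a b) : Clq I (insert a s) := by
  intro i hi j hj hne
  rcases Finset.mem_insert.1 hi with rfl | hi' <;> rcases Finset.mem_insert.1 hj with rfl | hj'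
  · exact absurd rfl hne
  · exact haI j hj'
  · exact hsym _ _ (haI i hi')
  · exact hs i hi' j hj' hne

variable (I)

open Classical in
/-- the cliques `s` such that `y = x · σ(s)` for some trace `x` -/
noncomputable def Sy (y : (traceCon I).Quotient) : Finset (Finset α) :=
  Finset.univ.filter fun s => Clq I s ∧ ∃ x, x * cliq I s = y

open Classical in
/-- the trace `x` with `x · σ(s) = y`, if it exists -/
noncomputable def xof (y : (traceCon I).Quotient) (s : Finset α) : (traceCon I).Quotient :=
  if h : ∃ x, x * cliq I s = y then h.choose else 1

open Classical in
/-- the pivot set for the sign-reversing involution -/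
noncomputable def T (y : (traceCon I).Quotient) (s : Finset α) : Finset α :=
  s ∪ (Finset.univ.filter fun a =>
    (∃ w, w * (traceCon I).mk' (of a) = xof I y s) ∧ ∀ b ∈ s, I a b)

open Classical in
/-- the sign-reversing involution -/
noncomputable def g (y : (traceCon I).Quotient) (s : Finset α) : Finset α :=
  if h : (T I y s).Nonempty then
    (if (T I y s).min' h ∈ s then s.erase ((T I y s).min' h)
     else insert ((T I y s).min' h) s)
  else s

variable {I}

lemma mem_Sy {y : (traceCon I).Quotient} {s : Finset α} :
    s ∈ Sy I y ↔ Clq I s ∧ ∃ x, x * cliq I s = y := by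
  simp [Sy]

lemma mem_T {y : (traceCon I).Quotient} {s : Finset α} {a : α} :
    a ∈ T I y s ↔ a ∈ s ∨
      ((∃ w, w * (traceCon I).mk' (of a) = xof I y s) ∧ ∀ b ∈ s, I a b) := by
  unfold T; rw [Finset.mem_union]
  open Classical in exact or_congr Iff.rfl (Finset.mem_filter.trans (by simp only [Finset.mem_univ, true_and]))

lemma xof_spec {y : (traceCon I).Quotient} {s : Finset α} (h : ∃ x, x * cliq I s = y) :
    xof I y s * cliq I s = y := by
  rw [xof, dif_pos h]
  exact h.choose_spec

lemma min'_congr {s t : Finset α} (h : s = t) (hs : s.Nonempty) :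
    s.min' hs = t.min' (h ▸ hs) := by subst h; rfl

section Main
variable (hirr : ∀ a, ¬ I a a) (hsym : ∀ a b, I a b → I b a)
include hirr hsym

lemma xof_eq {y x : (traceCon I).Quotient} {s : Finset α} (hx : x * cliq I s = y) :
    xof I y s = x :=
  cancel_right_q hirr hsym ((xof_spec ⟨x, hx⟩).trans hx.symm)

/-- erasing a member of the clique transfers it onto the end of `x` -/
lemma erase_facts {y : (traceCon I).Quotient} {s : Finset α} {a : α}
    (hSy : s ∈ Sy I y) (ha : a ∈ s) :
    s.erase a ∈ Sy I y ∧ xof I y (s.erase a) = xof I y s * (traceCon I).mk' (of a) := by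
  obtain ⟨hclq, hex⟩ := mem_Sy.1 hSy
  have hx := xof_spec hex
  have hkey : (xof I y s * (traceCon I).mk' (of a)) * cliq I (s.erase a) = y := by
    rw [mul_assoc, ← cliq_cons hclq ha, hx]
  exact ⟨mem_Sy.2 ⟨Clq_erase hclq a, _, hkey⟩, xof_eq hirr hsym hkey⟩

/-- moving a last letter of `x` into the clique -/
lemma insert_facts {y : (traceCon I).Quotient} {s : Finset α} {a : α} {w : (traceCon I).Quotient}
    (hSy : s ∈ Sy I y) (ha : a ∉ s) (haI : ∀ b ∈ s, I a b)
    (hw : w * (traceCon I).mk' (of a) = xof I y s) :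
    insert a s ∈ Sy I y ∧ xof I y (insert a s) = w := by
  obtain ⟨hclq, hex⟩ := mem_Sy.1 hSy
  have hx := xof_spec hex
  have hins : cliq I (insert a s) = (traceCon I).mk' (of a) * cliq I s := by
    have := cliq_cons (Clq_insert hsym hclq haI) (Finset.mem_insert_self a s)
    rwa [Finset.erase_insert ha] at this
  have hkey : w * cliq I (insert a s) = y := by
    rw [hins, ← mul_assoc, hw, hx]
  exact ⟨mem_Sy.2 ⟨Clq_insert hsym hclq haI, _, hkey⟩, xof_eq hirr hsym hkey⟩

/-- the pivot set is unchanged when a last letter of `x` is moved into the clique -/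
lemma T_insert {y : (traceCon I).Quotient} {s : Finset α} {a : α} {w : (traceCon I).Quotient}
    (hSy : s ∈ Sy I y) (ha : a ∉ s) (haI : ∀ b ∈ s, I a b)
    (hw : w * (traceCon I).mk' (of a) = xof I y s) :
    T I y (insert a s) = T I y s := by
  obtain ⟨hSy', hxw⟩ := insert_facts hirr hsym hSy ha haI hw
  ext b
  rw [mem_T, mem_T, Finset.mem_insert]
  constructor
  · rintro ((rfl | hb) | ⟨⟨u, hu⟩, hbI⟩)
    · exact Or.inr ⟨⟨w, hw⟩, haI⟩
    · exact Or.inl hb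
    · -- b is a last letter of w; it is also a last letter of x = w · a
      rw [hxw] at hu
      have hba : I b a := hbI a (Finset.mem_insert_self a s)
      refine Or.inr ⟨⟨u * (traceCon I).mk' (of a), ?_⟩,
        fun c hc => hbI c (Finset.mem_insert_of_mem hc)⟩
      rw [mul_assoc, ← comm_q hba, ← mul_assoc, hu, hw]
  · rintro (hb | ⟨⟨u, hu⟩, hbI⟩)
    · exact Or.inl (Or.inr hb)
    · by_cases hba : b = a
      · exact Or.inl (Or.inl hba)
      · -- u · b = x = w · a with b ≠ a : apply Levi
        have hub : u * (traceCon I).mk' (of b) = w * (traceCon I).mk' (of a) := by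
          rw [hu, ← hw]
        obtain ⟨hIba, z, hz1, hz2⟩ := levi hirr hsym hba hub
        refine Or.inr ⟨⟨z, by rw [hxw, ← hz2]⟩, ?_⟩
        intro c hc
        rcases Finset.mem_insert.1 hc with rfl | hc'
        · exact hIba
        · exact hbI c hc'

lemma T_nonempty {y : (traceCon I).Quotient} (hy : y ≠ 1) {s : Finset α}
    (hSy : s ∈ Sy I y) : (T I y s).Nonempty := by
  rcases s.eq_empty_or_nonempty with rfl | ⟨b, hb⟩
  · -- x = y ≠ 1 so x has a last letter
    obtain ⟨hclq, hex⟩ := mem_Sy.1 hSy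
    have hx : xof I y ∅ = y := by
      apply xof_eq hirr hsym
      rw [cliq_empty, mul_one]
    obtain ⟨u, rfl⟩ := Con.mk'_surjective (c := traceCon I) y
    rcases List.eq_nil_or_concat (toList u) with h0 | ⟨l, a, h0⟩
    · exfalso
      apply hy
      have : u = 1 := by
        have := congrArg ofList h0
        rwa [ofList_toList] at this
      rw [this, map_one]
    · refine ⟨a, mem_T.2 (Or.inr ⟨⟨(traceCon I).mk' (ofList l), ?_⟩, by simp⟩)⟩
      rw [hx, ← map_mul]
      have h1 := congrArg ofList h0
      rw [ofList_toList, List.concat_eq_append, ofList_append, ofList_singleton] at h1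
      rw [← h1]
  · exact ⟨b, mem_T.2 (Or.inl hb)⟩

/-- main case analysis for the involution -/
lemma g_facts {y : (traceCon I).Quotient} (hy : y ≠ 1) {s : Finset α} (hSy : s ∈ Sy I y) :
    g I y s ∈ Sy I y ∧ T I y (g I y s) = T I y s ∧ g I y (g I y s) = s ∧
      g I y s ≠ s ∧ ((-1 : ℝ)) ^ s.card + ((-1 : ℝ)) ^ (g I y s).card = 0 := by
  obtain ⟨hclq, hex⟩ := mem_Sy.1 hSy
  have hne := T_nonempty hirr hsym hy hSy
  set a := (T I y s).min' hne with hadef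
  have haT : a ∈ T I y s := (T I y s).min'_mem hne
  by_cases ha : a ∈ s
  · -- case A : erase a
    have hgs : g I y s = s.erase a := by
      rw [g, dif_pos hne, if_pos ha]
    obtain ⟨hSy', hxw⟩ := erase_facts hirr hsym hSy ha
    have haI' : ∀ b ∈ s.erase a, I a b := fun b hb =>
      hclq a ha b (Finset.mem_of_mem_erase hb) (Ne.symm (Finset.ne_of_mem_erase hb))
    have hTeq : T I y (s.erase a) = T I y s := by
      have h2 := T_insert hirr hsym hSy' (Finset.notMem_erase a s) haI' hxw.symm
      rw [Finset.insert_erase ha] at h2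
      exact h2.symm
    refine ⟨hgs ▸ hSy', hgs ▸ hTeq, ?_, ?_, ?_⟩
    · -- g (g s) = s
      have hne' : (T I y (s.erase a)).Nonempty := by rw [hTeq]; exact hne
      have hmin : (T I y (s.erase a)).min' hne' = a := by
        rw [min'_congr hTeq hne']
      rw [hgs, g, dif_pos hne', hmin, if_neg (Finset.notMem_erase a s)]
      exact Finset.insert_erase ha
    · rw [hgs]
      intro hcon
      rw [← hcon] at ha
      exact Finset.notMem_erase a s ha
    · rw [hgs]
      have : s.card = (s.erase a).card + 1 := (Finset.card_erase_add_one ha).symm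
      rw [this, pow_succ]
      ring
  · -- case B : insert a
    obtain ⟨⟨w, hw⟩, haI⟩ := (mem_T.1 haT).resolve_left ha
    have hgs : g I y s = insert a s := by
      rw [g, dif_pos hne, if_neg ha]
    obtain ⟨hSy', hxw⟩ := insert_facts hirr hsym hSy ha haI hw
    have hTeq : T I y (insert a s) = T I y s := T_insert hirr hsym hSy ha haI hw
    refine ⟨hgs ▸ hSy', hgs ▸ hTeq, ?_, ?_, ?_⟩
    · have hne' : (T I y (g I y s)).Nonempty := by rw [hgs, hTeq]; exact hne
      have hTT : T I y (g I y s) = T I y s := by rw [hgs, hTeq]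
      have hmin : (T I y (g I y s)).min' hne' = a := by
        rw [min'_congr hTT hne']
      rw [g, dif_pos hne', hmin, hgs, if_pos (Finset.mem_insert_self a s),
        Finset.erase_insert ha]
    · rw [hgs]
      intro hcon
      exact ha (hcon ▸ Finset.mem_insert_self a s)
    · rw [hgs, Finset.card_insert_of_notMem ha, pow_succ]
      ring

theorem fiber_sum {y : (traceCon I).Quotient} (hy : y ≠ 1) :
    ∑ s ∈ Sy I y, ((-1 : ℝ)) ^ s.card = 0 := by
  apply Finset.sum_involution (g := fun s _ => g I y s)
  · intro s hs
    exact (g_facts hirr hsym hy hs).2.2.2.2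
  · intro s hs _
    exact (g_facts hirr hsym hy hs).2.2.2.1
  · intro s hs
    exact (g_facts hirr hsym hy hs).1
  · intro s hs
    exact (g_facts hirr hsym hy hs).2.2.1

end Main
end Comb
section Length
variable [Fintype α] [LinearOrder α]
variable (ℓ : (traceCon I).Quotient →* Multiplicative ℕ)
  (hℓ : ∀ a : α, ℓ ((traceCon I).mk' (of a)) = Multiplicative.ofAdd 1)
include hℓ

lemma len_mk (l : List α) :
    ℓ ((traceCon I).mk' (ofList l)) = Multiplicative.ofAdd l.length := by
  induction l with
  | nil =>
    show ℓ ((traceCon I).mk' (ofList [])) = _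
    rw [show (ofList [] : FreeMonoid α) = 1 from rfl, map_one, map_one]
    simp
  | cons a l ih =>
    rw [ofList_cons, map_mul, map_mul, hℓ, ih, List.length_cons,
      show l.length + 1 = 1 + l.length from by omega, ofAdd_add]

lemma len_cliq {s : Finset α} :
    ℓ (cliq I s) = Multiplicative.ofAdd s.card := by
  rw [cliq, len_mk ℓ hℓ, Finset.length_sort]

lemma eq_one_of_len_zero {x : (traceCon I).Quotient}
    (hx : ℓ x = Multiplicative.ofAdd 0) : x = 1 := by
  obtain ⟨u, rfl⟩ := Con.mk'_surjective (c := traceCon I) x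
  have h1 : (traceCon I).mk' u = (traceCon I).mk' (ofList (toList u)) := by
    rw [ofList_toList]
  rw [h1, len_mk ℓ hℓ] at hx
  have : (toList u).length = 0 := Multiplicative.ofAdd.injective hx
  rw [h1, List.length_eq_zero_iff.1 this]
  exact map_one _
end Length

end TraceAux

open TraceAux in
/-- In any trace monoid `M(Σ,I)`, the growth series
`Z_M(t) = Σ_{x∈M} t^{|x|}` and the Möbius polynomial
`μ_M(t) = Σ_{c∈C} (-1)^{|c|} t^{|c|}` satisfy `Z_M(t)·μ_M(t) = 1` as formal
power series.  The length is encoded by the monoid morphism `ℓ` sending each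
generator to `1`; the coefficient of `Z_M` at `n` is the (finite) number of
traces of length `n`, and the coefficient of `μ_M` at `n` is `(-1)^n` times the
number of cliques of cardinality `n`. -/
theorem growth_series_mul_mobius_eq_one
    {α : Type*} [Fintype α] [DecidableEq α]
    (I : α → α → Prop) [DecidableRel I]
    (hirr : ∀ a, ¬ I a a) (hsym : ∀ a b, I a b → I b a)
    (ℓ : (traceCon I).Quotient →* Multiplicative ℕ)
    (hℓ : ∀ a : α, ℓ ((traceCon I).mk' (of a)) = Multiplicative.ofAdd 1)
    (hfin : ∀ n : ℕ, {x : (traceCon I).Quotient | ℓ x = Multiplicative.ofAdd n}.Finite) :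
    (PowerSeries.mk fun n =>
        (Nat.card {x : (traceCon I).Quotient // ℓ x = Multiplicative.ofAdd n} : ℝ)) *
      (PowerSeries.mk fun n =>
        (-1 : ℝ) ^ n * ((Finset.univ.filter fun s : Finset α =>
            s.card = n ∧ ∀ i ∈ s, ∀ j ∈ s, i ≠ j → I i j).card)) = 1 := by
  classical
  letI : LinearOrder α := LinearOrder.lift' (Fintype.equivFin α) (Fintype.equivFin α).injective
  apply PowerSeries.ext
  intro n
  rw [PowerSeries.coeff_mul]
  simp only [PowerSeries.coeff_mk]
  have hZ : ∀ m : ℕ,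
      (Nat.card {x : (traceCon I).Quotient // ℓ x = Multiplicative.ofAdd m} : ℕ)
        = ((hfin m).toFinset.card : ℕ) := by
    intro m
    rw [show {x : (traceCon I).Quotient // ℓ x = Multiplicative.ofAdd m}
        = ↥{x : (traceCon I).Quotient | ℓ x = Multiplicative.ofAdd m} from rfl,
      Nat.card_coe_set_eq, Set.ncard_eq_toFinset_card _ (hfin m)]
  cases n with
  | zero =>
    rw [Finset.Nat.antidiagonal_zero, Finset.sum_singleton]
    have hZ0 : Nat.card {x : (traceCon I).Quotient // ℓ x = Multiplicative.ofAdd 0} = 1 := by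
      haveI : Unique {x : (traceCon I).Quotient // ℓ x = Multiplicative.ofAdd 0} :=
        { default := ⟨1, by rw [map_one, ofAdd_zero]⟩
          uniq := fun y => Subtype.ext (by
            rw [eq_one_of_len_zero ℓ hℓ y.2]) }
      exact Nat.card_unique
    have hC0 : (Finset.univ.filter fun s : Finset α =>
        s.card = 0 ∧ ∀ i ∈ s, ∀ j ∈ s, i ≠ j → I i j).card = 1 := by
      have he : (Finset.univ.filter fun s : Finset α =>
          s.card = 0 ∧ ∀ i ∈ s, ∀ j ∈ s, i ≠ j → I i j) = {∅} := by
        ext s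
        simp only [Finset.mem_filter, Finset.mem_univ, true_and, Finset.mem_singleton,
          Finset.card_eq_zero]
        constructor
        · rintro ⟨h1, _⟩; exact h1
        · rintro rfl
          exact ⟨rfl, fun i hi => by simp at hi⟩
      rw [he, Finset.card_singleton]
    rw [hZ0, hC0, PowerSeries.coeff_one, if_pos rfl]
    norm_num
  | succ n =>
    rw [PowerSeries.coeff_one, if_neg (Nat.succ_ne_zero n)]
    -- rewrite each term of the antidiagonal sum as a double sum over pairs (x, s)
    have hterm : ∀ p ∈ Finset.HasAntidiagonal.antidiagonal (n + 1),
        (Nat.card {x : (traceCon I).Quotient // ℓ x = Multiplicative.ofAdd p.1} : ℝ) *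
          ((-1 : ℝ) ^ p.2 * ((Finset.univ.filter fun s : Finset α =>
            s.card = p.2 ∧ ∀ i ∈ s, ∀ j ∈ s, i ≠ j → I i j).card))
        = ∑ z ∈ (hfin p.1).toFinset ×ˢ (Finset.univ.filter fun s : Finset α =>
            s.card = p.2 ∧ ∀ i ∈ s, ∀ j ∈ s, i ≠ j → I i j), ((-1 : ℝ)) ^ z.2.card := by
      intro p hp
      rw [Finset.sum_product]
      have hinner : ∀ x : (traceCon I).Quotient,
          (∑ s ∈ (Finset.univ.filter fun s : Finset α =>
            s.card = p.2 ∧ ∀ i ∈ s, ∀ j ∈ s, i ≠ j → I i j), ((-1 : ℝ)) ^ s.card)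
          = ((Finset.univ.filter fun s : Finset α =>
            s.card = p.2 ∧ ∀ i ∈ s, ∀ j ∈ s, i ≠ j → I i j).card : ℝ) * (-1 : ℝ) ^ p.2 := by
        intro x
        rw [Finset.sum_congr rfl (fun s hs => by
          rw [(Finset.mem_filter.1 hs).2.1]), Finset.sum_const, nsmul_eq_mul]
      rw [Finset.sum_congr rfl (fun x _ => hinner x), Finset.sum_const, nsmul_eq_mul, hZ]
      push_cast
      ring
    rw [Finset.sum_congr rfl hterm, Finset.sum_sigma']
    -- reindex by (y, s) with y = x · σ(s)
    have hbij := Finset.sum_nbij'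
      (s := (Finset.HasAntidiagonal.antidiagonal (n + 1)).sigma
        (fun p => (hfin p.1).toFinset ×ˢ (Finset.univ.filter fun s : Finset α =>
            s.card = p.2 ∧ ∀ i ∈ s, ∀ j ∈ s, i ≠ j → I i j)))
      (t := ((hfin (n + 1)).toFinset).sigma (fun y => Sy I y))
      (f := fun z => ((-1 : ℝ)) ^ z.snd.2.card)
      (g := fun z => ((-1 : ℝ)) ^ z.snd.card)
      (fun z => ⟨z.snd.1 * cliq I z.snd.2, z.snd.2⟩)
      (fun z => ⟨(n + 1 - z.snd.card, z.snd.card), (xof I z.fst z.snd, z.snd)⟩)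
      ?hi ?hj ?hleft ?hright ?hf
    case hi =>
      rintro ⟨p, x, s⟩ ha
      simp only [Finset.mem_sigma, Finset.mem_product, Finset.mem_filter, Finset.mem_univ,
        true_and, Set.Finite.mem_toFinset, Set.mem_setOf_eq, Finset.HasAntidiagonal.mem_antidiagonal] at ha ⊢
      obtain ⟨hp, hx, hcard, hclq⟩ := ha
      constructor
      · rw [map_mul, hx, len_cliq ℓ hℓ, ← ofAdd_add, hcard, hp]
      · exact mem_Sy.2 ⟨hclq, ⟨x, rfl⟩⟩
    case hj =>
      rintro ⟨y, s⟩ hb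
      simp only [Finset.mem_sigma, Set.Finite.mem_toFinset, Set.mem_setOf_eq] at hb
      obtain ⟨hy, hsS⟩ := hb
      obtain ⟨hclq, hex⟩ := mem_Sy.1 hsS
      have hxs := xof_spec hex
      have hlen : (Multiplicative.toAdd (ℓ (xof I y s))) + s.card = n + 1 := by
        apply Multiplicative.ofAdd.injective
        rw [ofAdd_add, ofAdd_toAdd, ← len_cliq ℓ hℓ (s := s), ← map_mul, hxs, hy]
      simp only [Finset.mem_sigma, Finset.mem_product, Finset.mem_filter, Finset.mem_univ,
        true_and, Set.Finite.mem_toFinset, Set.mem_setOf_eq, Finset.HasAntidiagonal.mem_antidiagonal]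
      refine ⟨by omega, ?_, hclq⟩
      rw [show n + 1 - s.card = Multiplicative.toAdd (ℓ (xof I y s)) from by omega,
        ofAdd_toAdd]
    case hleft =>
      rintro ⟨p, x, s⟩ ha
      simp only [Finset.mem_sigma, Finset.mem_product, Finset.mem_filter, Finset.mem_univ,
        true_and, Set.Finite.mem_toFinset, Set.mem_setOf_eq, Finset.HasAntidiagonal.mem_antidiagonal] at ha
      obtain ⟨hp, hx, hcard, hclq⟩ := ha
      have h1 : (n + 1 - s.card, s.card) = p := by
        have : s.card = p.2 := hcard
        exact Prod.ext (by omega) this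
      have h2 : xof I (x * cliq I s) s = x := xof_eq hirr hsym rfl
      dsimp only
      rw [h1, h2]
    case hright =>
      rintro ⟨y, s⟩ hb
      simp only [Finset.mem_sigma, Set.Finite.mem_toFinset, Set.mem_setOf_eq] at hb
      obtain ⟨hy, hsS⟩ := hb
      obtain ⟨hclq, hex⟩ := mem_Sy.1 hsS
      have hxs := xof_spec hex
      simp only [hxs]
    case hf =>
      rintro ⟨p, x, s⟩ _
      rfl
    rw [hbij, Finset.sum_sigma]
    apply Finset.sum_eq_zero
    intro y hy
    have hy1 : y ≠ 1 := by
      intro hcon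
      rw [Set.Finite.mem_toFinset, Set.mem_setOf_eq, hcon, map_one] at hy
      have : (0 : ℕ) = n + 1 := Multiplicative.ofAdd.injective (ofAdd_zero.trans hy)
      omega
    exact fiber_sum hirr hsym hy1
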